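/- Let d ≥ 1 be an integer, let p, q > 0, let E be a complex Banach space, and let K : ℝ^d → E be given by K(x) = ∑_{k∈ℤ^d} K̂(k)·exp(2πi⟨k,x⟩) with coefficients K̂(k) ∈ E satisfying ∑_{k∈ℤ^d} ‖K̂(k)‖·exp(2πσ‖k‖₁) < ∞ for some σ > 0. Assume ρ ∈ ℝ^d is nonresonant: for every nonzero k ∈ ℤ^d, ⟨k,ρ⟩ ∉ ℤ. Then for every fixed s ∈ ℤ^d, sup_{θ₀∈ℝ^d} ‖K̂(s) − exp(−2πi⟨s,θ₀⟩)·(A_N^{p,q})^{-1}·∑_{n=1}^{N−1} w_{p,q}(n/N)·K(θ₀ + nρ)·exp(−2πin⟨s,ρ⟩)‖ → 0 as N → ∞; i.e. the weighted average recovers each Fourier coefficient of K, uniformly in the initial angle θ₀. -/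

import Mathlib

open MeasureTheory Filter
open Topology

/-- The weighting function `w_{p,q}`. -/
noncomputable def wpq (p q : ℝ) (x : ℝ) : ℝ :=
  if x ∈ Set.Ioo (0 : ℝ) 1 then
    (∫ s in (0:ℝ)..1, Real.exp (-(s ^ (-p) * (1 - s) ^ (-q))))⁻¹ *
      Real.exp (-(x ^ (-p) * (1 - x) ^ (-q)))
  else 0

/-- The normalizer `A_N^{p,q} = ∑_{n=0}^{N-1} w_{p,q}(n/N)`. -/
noncomputable def Apq (p q : ℝ) (N : ℕ) : ℝ :=
  ∑ n ∈ Finset.range N, wpq p q ((n : ℝ) / N)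

/-- `⟨k, x⟩ = ∑_j k_j x_j` for `k ∈ ℤ^d`, `x ∈ ℝ^d`. -/
def dotZ {d : ℕ} (k : Fin d → ℤ) (x : Fin d → ℝ) : ℝ :=
  ∑ j, (k j : ℝ) * x j

noncomputable def cpq (p q : ℝ) : ℝ := ∫ s in (0:ℝ)..1, Real.exp (-(s ^ (-p) * (1 - s) ^ (-q)))

lemma cpq_pos (p q : ℝ) : 0 < cpq p q := by
  apply intervalIntegral.intervalIntegral_pos_of_pos_on
  · rw [intervalIntegrable_iff]
    rw [Set.uIoc_of_le (by norm_num : (0:ℝ) ≤ 1)]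
    apply MeasureTheory.Integrable.mono' (g := fun _ => (1:ℝ)) (integrable_const 1)
    · apply Measurable.aestronglyMeasurable
      exact (((measurable_id.pow_const _).mul ((measurable_const.sub measurable_id).pow_const _)).neg).exp
    · filter_upwards [ae_restrict_mem measurableSet_Ioc] with x hx
      rw [Real.norm_eq_abs, abs_of_pos (Real.exp_pos _)]
      apply Real.exp_le_one_iff.mpr
      simp only [neg_nonpos]
      have h1 : (0:ℝ) ≤ x ^ (-p) := Real.rpow_nonneg hx.1.le _
      have h2 : (0:ℝ) ≤ (1 - x) ^ (-q) := Real.rpow_nonneg (by linarith [hx.2]) _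
      positivity
  · intro x _
    exact Real.exp_pos _
  · norm_num

lemma wpq_eq (p q x : ℝ) (hx : x ∈ Set.Ioo (0:ℝ) 1) :
    wpq p q x = (cpq p q)⁻¹ * Real.exp (-(x ^ (-p) * (1 - x) ^ (-q))) := by
  rw [wpq, if_pos hx]; rfl

lemma wpq_zero (p q x : ℝ) (hx : x ∉ Set.Ioo (0:ℝ) 1) : wpq p q x = 0 := by
  rw [wpq, if_neg hx]

lemma wpq_nonneg (p q x : ℝ) : 0 ≤ wpq p q x := by
  by_cases hx : x ∈ Set.Ioo (0:ℝ) 1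
  · rw [wpq_eq p q x hx]
    have := cpq_pos p q
    positivity
  · rw [wpq_zero p q x hx]

lemma wpq_pos (p q x : ℝ) (hx : x ∈ Set.Ioo (0:ℝ) 1) : 0 < wpq p q x := by
  rw [wpq_eq p q x hx]
  have := cpq_pos p q
  positivity

lemma wpq_le (p q x : ℝ) : wpq p q x ≤ (cpq p q)⁻¹ := by
  by_cases hx : x ∈ Set.Ioo (0:ℝ) 1
  · rw [wpq_eq p q x hx]
    have h1 : (0:ℝ) ≤ x ^ (-p) := Real.rpow_nonneg hx.1.le _
    have h2 : (0:ℝ) ≤ (1 - x) ^ (-q) := Real.rpow_nonneg (by linarith [hx.2.le]) _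
    have hc := cpq_pos p q
    calc (cpq p q)⁻¹ * Real.exp (-(x ^ (-p) * (1 - x) ^ (-q)))
        ≤ (cpq p q)⁻¹ * 1 := by
          apply mul_le_mul_of_nonneg_left _ (by positivity)
          apply Real.exp_le_one_iff.mpr; simp only [neg_nonpos]; positivity
      _ = (cpq p q)⁻¹ := mul_one _
  · rw [wpq_zero p q x hx]
    have := cpq_pos p q
    positivity

/-- the exponent function -/
noncomputable def psipq (p q x : ℝ) : ℝ := Real.log x * (-p) + Real.log (1 - x) * (-q)

lemma gpq_eq (p q x : ℝ) (hx : x ∈ Set.Ioo (0:ℝ) 1) :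
    x ^ (-p) * (1 - x) ^ (-q) = Real.exp (psipq p q x) := by
  rw [psipq, Real.exp_add, Real.rpow_def_of_pos hx.1, Real.rpow_def_of_pos (by linarith [hx.2])]

lemma psipq_hasDeriv (p q x : ℝ) (hx : x ∈ Set.Ioo (0:ℝ) 1) :
    HasDerivAt (psipq p q) (x⁻¹ * (-p) + (1 - x)⁻¹ * (-1) * (-q)) x := by
  apply HasDerivAt.add
  · exact (Real.hasDerivAt_log hx.1.ne').mul_const _
  · have h1 : HasDerivAt (fun y : ℝ => 1 - y) (-1) x := by
      simpa using (hasDerivAt_id x).const_sub 1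
    exact ((Real.hasDerivAt_log (by linarith [hx.2] : 1 - x ≠ 0)).comp x h1).mul_const _

lemma psipq_cont (p q : ℝ) : ContinuousOn (psipq p q) (Set.Ioo (0:ℝ) 1) := by
  apply ContinuousOn.add
  · apply ContinuousOn.mul _ continuousOn_const
    exact Real.continuousOn_log.mono (fun x hx => by simp [ne_of_gt hx.1])
  · apply ContinuousOn.mul _ continuousOn_const
    apply (Real.continuousOn_log.comp (continuousOn_const.sub continuousOn_id))
    intro x hx
    simp only [Set.mem_compl_iff, Set.mem_singleton_iff, id_eq, Function.comp]
    intro h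
    have := hx.2
    simp only [Pi.sub_apply, id_eq] at h
    linarith

lemma psipq_antitoneOn (p q : ℝ) (hp : 0 < p) (hq : 0 < q) :
    AntitoneOn (psipq p q) (Set.Ioc (0:ℝ) (p / (p + q))) := by
  have hstar1 : p / (p + q) < 1 := by
    rw [div_lt_one (by linarith)]; linarith
  apply StrictAntiOn.antitoneOn
  apply strictAntiOn_of_deriv_neg (convex_Ioc _ _)
  · apply (psipq_cont p q).mono
    intro x hx; exact ⟨hx.1, lt_of_le_of_lt hx.2 hstar1⟩
  · intro x hx
    rw [interior_Ioc] at hx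
    have hx' : x ∈ Set.Ioo (0:ℝ) 1 := ⟨hx.1, lt_trans hx.2 hstar1⟩
    rw [(psipq_hasDeriv p q x hx').deriv]
    have h1 : 0 < 1 - x := by linarith [hx'.2]
    have hlt : x * (p + q) < p := by
      have := hx.2
      rw [lt_div_iff₀ (by linarith : (0:ℝ) < p + q)] at this
      exact this
    have e1 : (1 - x)⁻¹ * (-1) * (-q) = q / (1 - x) := by field_simp
    have e2 : x⁻¹ * (-p) = -(p / x) := by field_simp
    rw [e1, e2]
    have : q / (1 - x) < p / x := by
      rw [div_lt_div_iff₀ h1 hx.1]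
      nlinarith
    linarith

lemma psipq_monotoneOn (p q : ℝ) (hp : 0 < p) (hq : 0 < q) :
    MonotoneOn (psipq p q) (Set.Ico (p / (p + q)) 1) := by
  have hstar0 : 0 < p / (p + q) := by positivity
  apply StrictMonoOn.monotoneOn
  apply strictMonoOn_of_deriv_pos (convex_Ico _ _)
  · apply (psipq_cont p q).mono
    intro x hx; exact ⟨lt_of_lt_of_le hstar0 hx.1, hx.2⟩
  · intro x hx
    rw [interior_Ico] at hx
    have hx' : x ∈ Set.Ioo (0:ℝ) 1 := ⟨lt_trans hstar0 hx.1, hx.2⟩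
    rw [(psipq_hasDeriv p q x hx').deriv]
    have h1 : 0 < 1 - x := by linarith [hx'.2]
    have hgt : p < x * (p + q) := by
      have := hx.1
      rw [div_lt_iff₀ (by linarith : (0:ℝ) < p + q)] at this
      exact this
    have e1 : (1 - x)⁻¹ * (-1) * (-q) = q / (1 - x) := by field_simp
    have e2 : x⁻¹ * (-p) = -(p / x) := by field_simp
    rw [e1, e2]
    have : p / x < q / (1 - x) := by
      rw [div_lt_div_iff₀ hx'.1 h1]
      nlinarith
    linarith

lemma wpq_monotoneOn (p q : ℝ) (hp : 0 < p) (hq : 0 < q) :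
    MonotoneOn (wpq p q) (Set.Icc 0 (p / (p + q))) := by
  have hstar1 : p / (p + q) < 1 := by rw [div_lt_one (by linarith)]; linarith
  intro x hx y hy hxy
  rcases eq_or_lt_of_le hx.1 with h0 | h0
  · rw [wpq_zero p q x (by rw [← h0]; simp)]
    exact wpq_nonneg p q y
  · have hy0 : 0 < y := lt_of_lt_of_le h0 hxy
    have hxI : x ∈ Set.Ioo (0:ℝ) 1 := ⟨h0, lt_of_le_of_lt hx.2 hstar1⟩
    have hyI : y ∈ Set.Ioo (0:ℝ) 1 := ⟨hy0, lt_of_le_of_lt hy.2 hstar1⟩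
    rw [wpq_eq p q x hxI, wpq_eq p q y hyI, gpq_eq p q x hxI, gpq_eq p q y hyI]
    have hmono := psipq_antitoneOn p q hp hq ⟨h0, hx.2⟩ ⟨hy0, hy.2⟩ hxy
    have hc := cpq_pos p q
    apply mul_le_mul_of_nonneg_left _ (by positivity)
    apply Real.exp_le_exp.mpr
    simp only [neg_le_neg_iff]
    exact Real.exp_le_exp.mpr hmono

lemma wpq_antitoneOn (p q : ℝ) (hp : 0 < p) (hq : 0 < q) :
    AntitoneOn (wpq p q) (Set.Icc (p / (p + q)) 1) := by
  have hstar0 : 0 < p / (p + q) := by positivity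
  intro x hx y hy hxy
  rcases eq_or_lt_of_le hy.2 with h1 | h1
  · rw [wpq_zero p q y (by rw [h1]; simp)]
    exact wpq_nonneg p q x
  · have hx1 : x < 1 := lt_of_le_of_lt hxy h1
    have hxI : x ∈ Set.Ioo (0:ℝ) 1 := ⟨lt_of_lt_of_le hstar0 hx.1, hx1⟩
    have hyI : y ∈ Set.Ioo (0:ℝ) 1 := ⟨lt_of_lt_of_le hstar0 hy.1, h1⟩
    rw [wpq_eq p q x hxI, wpq_eq p q y hyI, gpq_eq p q x hxI, gpq_eq p q y hyI]
    have hmono := psipq_monotoneOn p q hp hq ⟨hx.1, hx1⟩ ⟨hy.1, h1⟩ hxy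
    have hc := cpq_pos p q
    apply mul_le_mul_of_nonneg_left _ (by positivity)
    apply Real.exp_le_exp.mpr
    simp only [neg_le_neg_iff]
    exact Real.exp_le_exp.mpr hmono

lemma wpq_tv (p q : ℝ) (hp : 0 < p) (hq : 0 < q) (N : ℕ) :
    ∑ n ∈ Finset.range N,
      |wpq p q (((n:ℝ)+1) / N) - wpq p q ((n:ℝ) / N)| ≤ 3 * (cpq p q)⁻¹ := by
  have hc := cpq_pos p q
  rcases Nat.eq_zero_or_pos N with rfl | hN
  · simp; positivity
  have hNR : (0:ℝ) < N := by exact_mod_cast hN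
  set xs : ℝ := p / (p + q) with hxs
  have hxs0 : 0 < xs := by positivity
  have hxs1 : xs < 1 := by rw [hxs, div_lt_one (by linarith)]; linarith
  set a : ℕ → ℝ := fun n => wpq p q ((n:ℝ) / N) with ha
  set m : ℕ := min ⌊xs * N⌋₊ N with hm
  have hup : ∀ n : ℕ, n + 1 ≤ m → a n ≤ a (n + 1) := by
    intro n hn
    have h1 : ((n:ℝ) + 1) ≤ xs * N := by
      calc ((n:ℝ) + 1) ≤ (m : ℝ) := by exact_mod_cast hn
        _ ≤ (⌊xs * N⌋₊ : ℝ) := by exact_mod_cast min_le_left _ _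
        _ ≤ xs * N := Nat.floor_le (by positivity)
    have h2 : ((n:ℝ) + 1) / N ≤ xs := by rw [div_le_iff₀ hNR]; linarith
    have h3 : (n:ℝ) / N ≤ xs := by rw [div_le_iff₀ hNR]; linarith
    have := wpq_monotoneOn p q hp hq (a := (n:ℝ)/N) (b := ((n:ℝ)+1)/N)
      ⟨by positivity, h3⟩ ⟨by positivity, h2⟩ (by gcongr; linarith)
    simp only [ha]
    push_cast
    exact this
  have hdown : ∀ n : ℕ, m + 1 ≤ n → n + 1 ≤ N → a (n + 1) ≤ a n := by
    intro n hn hnN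
    rcases le_or_gt ⌊xs * N⌋₊ N with hfl | hfl
    · have hmfl : m = ⌊xs * N⌋₊ := min_eq_left hfl
      have h1 : xs * N < n := by
        calc xs * N < (⌊xs * N⌋₊ : ℝ) + 1 := Nat.lt_floor_add_one _
          _ ≤ (n : ℝ) := by rw [← hmfl]; exact_mod_cast hn
      have h2 : xs ≤ (n:ℝ) / N := by rw [le_div_iff₀ hNR]; linarith
      have h3 : xs ≤ ((n:ℝ) + 1) / N := by rw [le_div_iff₀ hNR]; linarith
      have h4 : ((n:ℝ) + 1) / N ≤ 1 := by
        rw [div_le_one hNR]; exact_mod_cast hnN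
      have h5 : (n:ℝ) / N ≤ 1 := by
        rw [div_le_one hNR]; exact_mod_cast (by omega : n ≤ N)
      have := wpq_antitoneOn p q hp hq (a := (n:ℝ)/N) (b := ((n:ℝ)+1)/N)
        ⟨h2, h5⟩ ⟨h3, h4⟩ (by gcongr; linarith)
      simp only [ha]
      push_cast
      exact this
    · exfalso
      have : m = N := min_eq_right hfl.le
      omega
  have habs : ∀ i j : ℕ, |a i - a j| ≤ (cpq p q)⁻¹ := by
    intro i j
    have h1 := wpq_le p q ((i:ℝ)/N)
    have h2 := wpq_le p q ((j:ℝ)/N)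
    have h3 := wpq_nonneg p q ((i:ℝ)/N)
    have h4 := wpq_nonneg p q ((j:ℝ)/N)
    rw [abs_le]
    constructor <;> simp only [ha] <;> linarith
  have key : ∀ n : ℕ, (n:ℝ) + 1 = ((n + 1 : ℕ) : ℝ) := by intro n; push_cast; ring
  have hsum_eq : ∑ n ∈ Finset.range N, |wpq p q (((n:ℝ)+1) / N) - wpq p q ((n:ℝ) / N)|
      = ∑ n ∈ Finset.range N, |a (n+1) - a n| := by
    apply Finset.sum_congr rfl
    intro n _
    simp only [ha, key]
  rw [hsum_eq]
  rcases le_or_gt N m with hNm | hmN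
  · have : ∑ n ∈ Finset.range N, |a (n+1) - a n| = a N - a 0 := by
      rw [← Finset.sum_range_sub a N]
      apply Finset.sum_congr rfl
      intro n hn
      rw [Finset.mem_range] at hn
      exact abs_of_nonneg (by linarith [hup n (by omega)])
    rw [this]
    have := habs N 0
    have := abs_le.mp this
    linarith
  · have hsplit : ∑ n ∈ Finset.range N, |a (n+1) - a n|
        = (∑ n ∈ Finset.range m, |a (n+1) - a n|) + |a (m+1) - a m|
          + ∑ n ∈ Finset.Ico (m+1) N, |a (n+1) - a n| := by
      rw [Finset.range_eq_Ico, ← Finset.sum_Ico_consecutive _ (Nat.zero_le (m+1)) hmN,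
        ← Finset.range_eq_Ico, Finset.sum_range_succ]
    rw [hsplit]
    have e1 : ∑ n ∈ Finset.range m, |a (n+1) - a n| = a m - a 0 := by
      rw [← Finset.sum_range_sub a m]
      apply Finset.sum_congr rfl
      intro n hn
      rw [Finset.mem_range] at hn
      exact abs_of_nonneg (by linarith [hup n (by omega)])
    have e2 : ∑ n ∈ Finset.Ico (m+1) N, |a (n+1) - a n| = a (m+1) - a N := by
      rw [Finset.sum_Ico_eq_sum_range]
      have : ∀ i ∈ Finset.range (N - (m+1)), |a (m+1+i+1) - a (m+1+i)| = a (m+1+i) - a (m+1+i+1) := by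
        intro i hi
        rw [Finset.mem_range] at hi
        rw [abs_sub_comm]
        exact abs_of_nonneg (by linarith [hdown (m+1+i) (by omega) (by omega)])
      rw [Finset.sum_congr rfl this]
      have := Finset.sum_range_sub' (fun i => a (m+1+i)) (N - (m+1))
      calc ∑ i ∈ Finset.range (N - (m+1)), (a (m+1+i) - a (m+1+i+1))
          = a (m+1+0) - a (m+1+(N-(m+1))) := by
            rw [← this]
            apply Finset.sum_congr rfl
            intro i _
            congr 1
        _ = a (m+1) - a N := by congr 2 <;> omega
    rw [e1, e2]
    have h1 := habs m 0
    have h2 := habs (m+1) m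
    have h3 := habs (m+1) N
    rw [abs_le] at h1 h2 h3
    have h4 := abs_le.mpr h2
    linarith [h1.2, h2.2, h3.2, abs_nonneg (a (m+1) - a m), le_abs_self (a (m+1) - a m), h2]

lemma apq_eq_Ico (p q : ℝ) (N : ℕ) :
    Apq p q N = ∑ n ∈ (Finset.Ico 1 N : Finset ℕ), wpq p q ((n:ℝ) / N) := by
  rcases Nat.eq_zero_or_pos N with rfl | hN
  · simp [Apq]
  rw [Apq, Finset.range_eq_Ico, ← Finset.sum_Ico_consecutive _ (Nat.zero_le 1) hN]
  have : ∑ n ∈ (Finset.Ico 0 1 : Finset ℕ), wpq p q ((n:ℝ) / N) = 0 := by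
    simp [wpq_zero p q 0 (by simp)]
  rw [this, zero_add]

lemma apq_nonneg (p q : ℝ) (N : ℕ) : 0 ≤ Apq p q N :=
  Finset.sum_nonneg fun n _ => wpq_nonneg p q _

lemma apq_tendsto (p q : ℝ) (hp : 0 < p) (hq : 0 < q) :
    Tendsto (fun N => Apq p q N) atTop atTop := by
  have hc := cpq_pos p q
  set δ : ℝ := (cpq p q)⁻¹ * Real.exp (-((4:ℝ) ^ p * (4:ℝ) ^ q)) with hδdef
  have hδ : 0 < δ := by positivity
  have hlow : ∀ N : ℕ, ((N/2 - N/4 : ℕ) : ℝ) * δ ≤ Apq p q N := by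
    intro N
    have hsub : Finset.Icc (N/4+1) (N/2) ⊆ Finset.range N := by
      intro n hn
      rw [Finset.mem_Icc] at hn
      rw [Finset.mem_range]
      omega
    have hterm : ∀ n ∈ Finset.Icc (N/4+1) (N/2), δ ≤ wpq p q ((n:ℝ)/N) := by
      intro n hn
      rw [Finset.mem_Icc] at hn
      have hN2 : 2 ≤ N := by omega
      have hNR : (0:ℝ) < N := by exact_mod_cast (by omega : 0 < N)
      have h14 : (1:ℝ)/4 ≤ (n:ℝ)/N := by
        rw [div_le_div_iff₀ (by norm_num) hNR]
        have : N ≤ 4 * n := by omega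
        exact_mod_cast by linarith [(by exact_mod_cast this : (N:ℝ) ≤ 4*n)]
      have h12 : (n:ℝ)/N ≤ 1/2 := by
        rw [div_le_div_iff₀ hNR (by norm_num)]
        have : 2 * n ≤ N := by omega
        exact_mod_cast by linarith [(by exact_mod_cast this : (2:ℝ)*n ≤ N)]
      set x : ℝ := (n:ℝ)/N with hx
      have hxI : x ∈ Set.Ioo (0:ℝ) 1 := ⟨by linarith, by linarith⟩
      rw [wpq_eq p q x hxI]
      have hb1 : x ^ (-p) ≤ (4:ℝ) ^ p := by
        rw [Real.rpow_neg (by linarith)]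
        have h1 : ((4:ℝ)⁻¹) ^ p ≤ x ^ p := Real.rpow_le_rpow (by norm_num) (by linarith) hp.le
        have h2 : (0:ℝ) < ((4:ℝ)⁻¹) ^ p := Real.rpow_pos_of_pos (by norm_num) _
        calc (x ^ p)⁻¹ ≤ (((4:ℝ)⁻¹) ^ p)⁻¹ := by
              apply inv_anti₀ h2 h1
          _ = (4:ℝ) ^ p := by rw [← Real.inv_rpow (by norm_num), inv_inv]
      have hb2 : (1 - x) ^ (-q) ≤ (4:ℝ) ^ q := by
        rw [Real.rpow_neg (by linarith)]
        have h1 : ((4:ℝ)⁻¹) ^ q ≤ (1-x) ^ q := Real.rpow_le_rpow (by norm_num) (by linarith) hq.le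
        have h2 : (0:ℝ) < ((4:ℝ)⁻¹) ^ q := Real.rpow_pos_of_pos (by norm_num) _
        calc ((1-x) ^ q)⁻¹ ≤ (((4:ℝ)⁻¹) ^ q)⁻¹ := by
              apply inv_anti₀ h2 h1
          _ = (4:ℝ) ^ q := by rw [← Real.inv_rpow (by norm_num), inv_inv]
      have hg : x ^ (-p) * (1-x) ^ (-q) ≤ (4:ℝ)^p * (4:ℝ)^q := by
        apply mul_le_mul hb1 hb2 (Real.rpow_nonneg (by linarith) _)
        positivity
      rw [hδdef]
      apply mul_le_mul_of_nonneg_left _ (by positivity)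
      exact Real.exp_le_exp.mpr (by linarith)
    calc ((N/2 - N/4 : ℕ) : ℝ) * δ
        = (Finset.Icc (N/4+1) (N/2)).card • δ := by
          rw [Nat.card_Icc, nsmul_eq_mul]
          congr 2
          omega
      _ ≤ ∑ n ∈ Finset.Icc (N/4+1) (N/2), wpq p q ((n:ℝ)/N) := Finset.card_nsmul_le_sum _ _ _ hterm
      _ ≤ ∑ n ∈ Finset.range N, wpq p q ((n:ℝ)/N) :=
          Finset.sum_le_sum_of_subset_of_nonneg hsub (fun n _ _ => wpq_nonneg p q _)
      _ = Apq p q N := rfl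
  apply tendsto_atTop_mono hlow
  apply Tendsto.atTop_mul_const hδ
  apply tendsto_natCast_atTop_atTop.comp
  rw [tendsto_atTop_atTop]
  intro b
  exact ⟨4*b + 8, fun a ha => by omega⟩

lemma geom_bound (z : ℂ) (hz : ‖z‖ = 1) (hz1 : z ≠ 1) (n : ℕ) :
    ‖∑ j ∈ Finset.range n, z ^ j‖ ≤ 2 / ‖1 - z‖ := by
  rw [geom_sum_eq hz1]
  rw [norm_div]
  have h1 : ‖z ^ n - 1‖ ≤ 2 := by
    calc ‖z ^ n - 1‖ ≤ ‖z ^ n‖ + ‖(1:ℂ)‖ := norm_sub_le _ _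
      _ = 2 := by rw [norm_pow, hz]; norm_num
  have h2 : ‖z - 1‖ = ‖1 - z‖ := norm_sub_rev _ _
  rw [h2]
  rcases eq_or_lt_of_le (norm_nonneg (1 - z)) with h0 | h0
  · rw [← h0]; simp
  · gcongr

lemma abel_bound (p q : ℝ) (hp : 0 < p) (hq : 0 < q) (z : ℂ) (hz : ‖z‖ = 1) (hz1 : z ≠ 1)
    (N : ℕ) :
    ‖∑ n ∈ Finset.range N, ((wpq p q ((n:ℝ)/N) : ℝ) : ℂ) * z ^ n‖
      ≤ 8 * (cpq p q)⁻¹ / ‖1 - z‖ := by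
  have hc := cpq_pos p q
  have hz0 : 0 < ‖1 - z‖ := by
    rw [norm_pos_iff, sub_ne_zero]
    exact fun h => hz1 h.symm
  have hgeom := geom_bound z hz hz1
  have hparts := Finset.sum_range_by_parts (fun n : ℕ => ((wpq p q ((n:ℝ)/N) : ℝ) : ℂ))
    (fun n : ℕ => z ^ n) N
  simp only [smul_eq_mul] at hparts
  rw [hparts]
  have h1 : ‖((wpq p q (((N-1:ℕ):ℝ)/N) : ℝ) : ℂ) * ∑ i ∈ Finset.range N, z ^ i‖
      ≤ (cpq p q)⁻¹ * (2 / ‖1 - z‖) := by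
    rw [norm_mul, Complex.norm_real, Real.norm_eq_abs,
      abs_of_nonneg (wpq_nonneg p q _)]
    exact mul_le_mul (wpq_le p q _) (hgeom N) (norm_nonneg _) (by positivity)
  have h2 : ‖∑ i ∈ Finset.range (N-1),
      (((wpq p q (((i+1:ℕ):ℝ)/N) : ℝ) : ℂ) - ((wpq p q (((i:ℕ):ℝ)/N) : ℝ) : ℂ)) *
        ∑ j ∈ Finset.range (i+1), z ^ j‖
      ≤ 3 * (cpq p q)⁻¹ * (2 / ‖1 - z‖) := by
    calc ‖∑ i ∈ Finset.range (N-1),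
      (((wpq p q (((i+1:ℕ):ℝ)/N) : ℝ) : ℂ) - ((wpq p q (((i:ℕ):ℝ)/N) : ℝ) : ℂ)) *
        ∑ j ∈ Finset.range (i+1), z ^ j‖
        ≤ ∑ i ∈ Finset.range (N-1), ‖(((wpq p q (((i+1:ℕ):ℝ)/N) : ℝ) : ℂ) -
            ((wpq p q (((i:ℕ):ℝ)/N) : ℝ) : ℂ)) * ∑ j ∈ Finset.range (i+1), z ^ j‖ :=
          norm_sum_le _ _
      _ ≤ ∑ i ∈ Finset.range (N-1),
            |wpq p q (((i:ℝ)+1)/N) - wpq p q ((i:ℝ)/N)| * (2 / ‖1 - z‖) := by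
          apply Finset.sum_le_sum
          intro i _
          rw [norm_mul, ← Complex.ofReal_sub, Complex.norm_real, Real.norm_eq_abs]
          push_cast
          exact mul_le_mul_of_nonneg_left (hgeom (i+1)) (abs_nonneg _)
      _ = (∑ i ∈ Finset.range (N-1),
            |wpq p q (((i:ℝ)+1)/N) - wpq p q ((i:ℝ)/N)|) * (2 / ‖1 - z‖) := by
          rw [Finset.sum_mul]
      _ ≤ 3 * (cpq p q)⁻¹ * (2 / ‖1 - z‖) := by
          apply mul_le_mul_of_nonneg_right _ (by positivity)
          calc ∑ i ∈ Finset.range (N-1), |wpq p q (((i:ℝ)+1)/N) - wpq p q ((i:ℝ)/N)|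
              ≤ ∑ i ∈ Finset.range N, |wpq p q (((i:ℝ)+1)/N) - wpq p q ((i:ℝ)/N)| :=
                Finset.sum_le_sum_of_subset_of_nonneg
                  (Finset.range_subset_range.mpr (by omega)) (fun _ _ _ => abs_nonneg _)
            _ ≤ 3 * (cpq p q)⁻¹ := wpq_tv p q hp hq N
  calc ‖_ - _‖ ≤ ‖((wpq p q (((N-1:ℕ):ℝ)/N) : ℝ) : ℂ) * ∑ i ∈ Finset.range N, z ^ i‖ +
        ‖∑ i ∈ Finset.range (N-1),
          (((wpq p q (((i+1:ℕ):ℝ)/N) : ℝ) : ℂ) - ((wpq p q (((i:ℕ):ℝ)/N) : ℝ) : ℂ)) *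
            ∑ j ∈ Finset.range (i+1), z ^ j‖ := norm_sub_le _ _
    _ ≤ (cpq p q)⁻¹ * (2 / ‖1 - z‖) + 3 * (cpq p q)⁻¹ * (2 / ‖1 - z‖) := add_le_add h1 h2
    _ = 8 * (cpq p q)⁻¹ / ‖1 - z‖ := by field_simp; ring

lemma dotZ_sub {d : ℕ} (k s : Fin d → ℤ) (x : Fin d → ℝ) :
    dotZ (k - s) x = dotZ k x - dotZ s x := by
  simp only [dotZ, Pi.sub_apply, ← Finset.sum_sub_distrib]
  apply Finset.sum_congr rfl
  intro j _
  push_cast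
  ring

lemma dotZ_add_smul {d : ℕ} (k : Fin d → ℤ) (θ ρ : Fin d → ℝ) (n : ℕ) :
    dotZ k (θ + (n:ℝ) • ρ) = dotZ k θ + (n:ℝ) * dotZ k ρ := by
  simp only [dotZ, Pi.add_apply, Pi.smul_apply, smul_eq_mul, Finset.mul_sum,
    ← Finset.sum_add_distrib]
  apply Finset.sum_congr rfl
  intro j _
  ring

lemma dotZ_zero {d : ℕ} (x : Fin d → ℝ) : dotZ (0 : Fin d → ℤ) x = 0 := by
  simp [dotZ]


/-- For an analytic `E`-valued embedding `K` and a nonresonant rotation `ρ`, the weighted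
Birkhoff average recovers each Fourier coefficient `K̂(s)` of `K`, uniformly in the
initial angle `θ₀`. -/
theorem weighted_average_recovers_fourier_coefficients
    (d : ℕ) (hd : 1 ≤ d) (p q : ℝ) (hp : 0 < p) (hq : 0 < q)
    {E : Type*} [NormedAddCommGroup E] [NormedSpace ℂ E] [CompleteSpace E]
    (K : (Fin d → ℝ) → E) (Kh : (Fin d → ℤ) → E) (σ : ℝ) (hσ : 0 < σ)
    (hsum : Summable fun k : Fin d → ℤ =>
      ‖Kh k‖ * Real.exp (2 * Real.pi * σ * ∑ j, |(k j : ℝ)|))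
    (hK : ∀ x : Fin d → ℝ, HasSum (fun k : Fin d → ℤ =>
      Complex.exp (2 * Real.pi * Complex.I * ((dotZ k x : ℝ) : ℂ)) • Kh k) (K x))
    (ρ : Fin d → ℝ)
    (hρ : ∀ k : Fin d → ℤ, k ≠ 0 → ∀ n : ℤ, dotZ k ρ ≠ (n : ℝ)) :
    ∀ s : Fin d → ℤ,
      TendstoUniformly
        (fun (N : ℕ) (θ₀ : Fin d → ℝ) =>
          Complex.exp (-(2 * Real.pi * Complex.I) * ((dotZ s θ₀ : ℝ) : ℂ)) •
            (((Apq p q N : ℝ) : ℂ)⁻¹ •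
              ∑ n ∈ Finset.Ico 1 N,
                (((wpq p q ((n : ℝ) / N) : ℝ) : ℂ) *
                    Complex.exp (-(2 * Real.pi * Complex.I) * (n : ℂ) * ((dotZ s ρ : ℝ) : ℂ))) •
                  K (θ₀ + (n : ℝ) • ρ)))
        (fun _ => Kh s) atTop := by
  intro s
  set π := Real.pi
  set I := Complex.I
  -- the rotated exponential
  set zf : (Fin d → ℤ) → ℂ := fun k =>
    Complex.exp (2 * (π:ℂ) * I * ((dotZ (k - s) ρ : ℝ) : ℂ)) with hzf
  -- the weighted exponential average
  set S : ℕ → (Fin d → ℤ) → ℂ := fun N k =>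
    ((Apq p q N : ℝ) : ℂ)⁻¹ *
      ∑ n ∈ Finset.Ico 1 N, ((wpq p q ((n : ℝ) / N) : ℝ) : ℂ) * (zf k) ^ n with hS
  have hznorm : ∀ k, ‖zf k‖ = 1 := by
    intro k
    simp only [hzf]
    have : 2 * (π:ℂ) * I * ((dotZ (k - s) ρ : ℝ) : ℂ)
        = ((2 * π * dotZ (k - s) ρ : ℝ) : ℂ) * I := by push_cast; ring
    rw [this, Complex.norm_exp_ofReal_mul_I]
  have hzne : ∀ k, k ≠ s → zf k ≠ 1 := by
    intro k hk h1
    simp only [hzf] at h1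
    rw [Complex.exp_eq_one_iff] at h1
    obtain ⟨n, hn⟩ := h1
    apply hρ (k - s) (sub_ne_zero.mpr hk) n
    have h2π : (2 * (π:ℂ) * I) ≠ 0 := by
      simp [I, π, Complex.I_ne_zero, Complex.ofReal_ne_zero, Real.pi_ne_zero]
    have : ((dotZ (k - s) ρ : ℝ) : ℂ) = (n : ℂ) := by
      apply mul_left_cancel₀ h2π
      rw [hn]; ring
    exact_mod_cast this
  -- ‖S N k‖ ≤ 1 always
  have hSle : ∀ N k, ‖S N k‖ ≤ 1 := by
    intro N k
    rw [hS]
    simp only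
    rw [norm_mul]
    have h1 : ‖(((Apq p q N : ℝ)) : ℂ)⁻¹‖ = (Apq p q N)⁻¹ := by
      rw [norm_inv, Complex.norm_real, Real.norm_eq_abs, abs_of_nonneg (apq_nonneg p q N)]
    have h2 : ‖∑ n ∈ Finset.Ico 1 N, ((wpq p q ((n : ℝ) / N) : ℝ) : ℂ) * (zf k) ^ n‖
        ≤ Apq p q N := by
      rw [apq_eq_Ico]
      calc ‖∑ n ∈ Finset.Ico 1 N, ((wpq p q ((n : ℝ) / N) : ℝ) : ℂ) * (zf k) ^ n‖
          ≤ ∑ n ∈ Finset.Ico 1 N, ‖((wpq p q ((n : ℝ) / N) : ℝ) : ℂ) * (zf k) ^ n‖ :=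
            norm_sum_le _ _
        _ = ∑ n ∈ Finset.Ico 1 N, wpq p q ((n : ℝ) / N) := by
            apply Finset.sum_congr rfl
            intro n _
            rw [norm_mul, norm_pow, hznorm k, one_pow, mul_one, Complex.norm_real,
              Real.norm_eq_abs, abs_of_nonneg (wpq_nonneg p q _)]
    rw [h1]
    rcases eq_or_lt_of_le (apq_nonneg p q N) with h0 | h0
    · rw [← h0]; simp
    · calc (Apq p q N)⁻¹ * ‖∑ n ∈ Finset.Ico 1 N, ((wpq p q ((n : ℝ) / N) : ℝ) : ℂ) * (zf k) ^ n‖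
          ≤ (Apq p q N)⁻¹ * Apq p q N := by
            apply mul_le_mul_of_nonneg_left h2 (by positivity)
        _ = 1 := inv_mul_cancel₀ h0.ne'
  -- S N s = 1 when Apq ≠ 0
  have hSs : ∀ N, Apq p q N ≠ 0 → S N s = 1 := by
    intro N hA
    rw [hS]
    simp only
    have hz1 : zf s = 1 := by
      simp only [hzf, sub_self, dotZ_zero, Complex.ofReal_zero, mul_zero, Complex.exp_zero]
    rw [hz1]
    simp only [one_pow, mul_one]
    have : ∑ n ∈ Finset.Ico 1 N, ((wpq p q ((n : ℝ) / N) : ℝ) : ℂ)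
        = ((Apq p q N : ℝ) : ℂ) := by
      rw [apq_eq_Ico]
      push_cast
      rfl
    rw [this, inv_mul_cancel₀ (by exact_mod_cast hA)]
  -- unit modulus of exponentials
  have hunit : ∀ r : ℝ, ‖Complex.exp (2 * (π:ℂ) * I * (r : ℂ))‖ = 1 := by
    intro r
    have : 2 * (π:ℂ) * I * (r : ℂ) = ((2 * π * r : ℝ) : ℂ) * Complex.I := by
      simp only [I]; push_cast; ring
    rw [this, Complex.norm_exp_ofReal_mul_I]
  -- the coefficient HasSum identity
  have hcoef : ∀ (N : ℕ) (θ₀ : Fin d → ℝ),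
      HasSum (fun k => (Complex.exp (2 * (π:ℂ) * I * ((dotZ (k - s) θ₀ : ℝ) : ℂ)) * S N k) • Kh k)
        (Complex.exp (-(2 * (π:ℂ) * I) * ((dotZ s θ₀ : ℝ) : ℂ)) •
          (((Apq p q N : ℝ) : ℂ)⁻¹ •
            ∑ n ∈ Finset.Ico 1 N,
              (((wpq p q ((n : ℝ) / N) : ℝ) : ℂ) *
                  Complex.exp (-(2 * (π:ℂ) * I) * (n : ℂ) * ((dotZ s ρ : ℝ) : ℂ))) •
                K (θ₀ + (n : ℝ) • ρ))) := by
    intro N θ₀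
    have h1 : ∀ n : ℕ, HasSum
        (fun k => ((((wpq p q ((n : ℝ) / N) : ℝ) : ℂ) *
            Complex.exp (-(2 * (π:ℂ) * I) * (n : ℂ) * ((dotZ s ρ : ℝ) : ℂ))) *
              Complex.exp (2 * (π:ℂ) * I * ((dotZ k (θ₀ + (n:ℝ) • ρ) : ℝ) : ℂ))) • Kh k)
        ((((wpq p q ((n : ℝ) / N) : ℝ) : ℂ) *
            Complex.exp (-(2 * (π:ℂ) * I) * (n : ℂ) * ((dotZ s ρ : ℝ) : ℂ))) •
          K (θ₀ + (n : ℝ) • ρ)) := by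
      intro n
      have := (hK (θ₀ + (n : ℝ) • ρ)).const_smul ((((wpq p q ((n : ℝ) / N) : ℝ) : ℂ) *
        Complex.exp (-(2 * (π:ℂ) * I) * (n : ℂ) * ((dotZ s ρ : ℝ) : ℂ))))
      simp only [smul_smul] at this
      exact this
    have h2 := hasSum_sum (fun n (_ : n ∈ Finset.Ico 1 N) => h1 n)
    have h3 := (h2.const_smul (((Apq p q N : ℝ) : ℂ)⁻¹)).const_smul
      (Complex.exp (-(2 * (π:ℂ) * I) * ((dotZ s θ₀ : ℝ) : ℂ)))
    have expmul : ∀ (w A B C : ℂ), Complex.exp A * (w * Complex.exp B * Complex.exp C)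
        = w * Complex.exp (A + B + C) := by
      intro w A B C
      rw [Complex.exp_add, Complex.exp_add]; ring
    have expmul2 : ∀ (w DD EE : ℂ), Complex.exp DD * (w * Complex.exp EE)
        = w * Complex.exp (DD + EE) := by
      intro w DD EE
      rw [Complex.exp_add]; ring
    have hterm : ∀ k : Fin d → ℤ, ∀ n : ℕ,
        Complex.exp (-(2 * (π:ℂ) * I) * ((dotZ s θ₀ : ℝ) : ℂ)) *
        ((((wpq p q ((n : ℝ) / N) : ℝ) : ℂ) *
          Complex.exp (-(2 * (π:ℂ) * I) * (n : ℂ) * ((dotZ s ρ : ℝ) : ℂ))) *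
          Complex.exp (2 * (π:ℂ) * I * ((dotZ k (θ₀ + (n:ℝ) • ρ) : ℝ) : ℂ)))
        = Complex.exp (2 * (π:ℂ) * I * ((dotZ (k - s) θ₀ : ℝ) : ℂ)) *
            (((wpq p q ((n : ℝ) / N) : ℝ) : ℂ) * zf k ^ n) := by
      intro k n
      simp only [hzf]
      rw [← Complex.exp_nat_mul, expmul, expmul2]
      congr 2
      rw [dotZ_add_smul k θ₀ ρ n, dotZ_sub k s θ₀, dotZ_sub k s ρ]
      push_cast
      ring
    have hfun : (fun k => (Complex.exp (2 * (π:ℂ) * I * ((dotZ (k - s) θ₀ : ℝ) : ℂ)) * S N k) • Kh k)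
        = (fun k => Complex.exp (-(2 * (π:ℂ) * I) * ((dotZ s θ₀ : ℝ) : ℂ)) •
            (((Apq p q N : ℝ) : ℂ)⁻¹ •
              ∑ n ∈ Finset.Ico 1 N,
                (((((wpq p q ((n : ℝ) / N) : ℝ) : ℂ) *
                  Complex.exp (-(2 * (π:ℂ) * I) * (n : ℂ) * ((dotZ s ρ : ℝ) : ℂ))) *
                  Complex.exp (2 * (π:ℂ) * I * ((dotZ k (θ₀ + (n:ℝ) • ρ) : ℝ) : ℂ))) • Kh k))) := by
      funext k
      rw [← Finset.sum_smul]
      simp only [smul_smul]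
      congr 1
      simp only [hS]
      calc Complex.exp (2 * (π:ℂ) * I * ((dotZ (k - s) θ₀ : ℝ) : ℂ)) *
            (((Apq p q N : ℝ) : ℂ)⁻¹ *
              ∑ n ∈ Finset.Ico 1 N, ((wpq p q ((n : ℝ) / N) : ℝ) : ℂ) * (zf k) ^ n)
          = ((Apq p q N : ℝ) : ℂ)⁻¹ *
              ∑ n ∈ Finset.Ico 1 N, Complex.exp (2 * (π:ℂ) * I * ((dotZ (k - s) θ₀ : ℝ) : ℂ)) *
                (((wpq p q ((n : ℝ) / N) : ℝ) : ℂ) * (zf k) ^ n) := by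
            simp only [Finset.mul_sum]
            apply Finset.sum_congr rfl
            intro n _
            ring
        _ = ((Apq p q N : ℝ) : ℂ)⁻¹ *
              ∑ n ∈ Finset.Ico 1 N,
                Complex.exp (-(2 * (π:ℂ) * I) * ((dotZ s θ₀ : ℝ) : ℂ)) *
                ((((wpq p q ((n : ℝ) / N) : ℝ) : ℂ) *
                  Complex.exp (-(2 * (π:ℂ) * I) * (n : ℂ) * ((dotZ s ρ : ℝ) : ℂ))) *
                  Complex.exp (2 * (π:ℂ) * I * ((dotZ k (θ₀ + (n:ℝ) • ρ) : ℝ) : ℂ))) := by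
            congr 1
            apply Finset.sum_congr rfl
            intro n _
            rw [hterm k n]
        _ = Complex.exp (-(2 * (π:ℂ) * I) * ((dotZ s θ₀ : ℝ) : ℂ)) *
              (((Apq p q N : ℝ) : ℂ)⁻¹ *
                ∑ n ∈ Finset.Ico 1 N,
                  ((((wpq p q ((n : ℝ) / N) : ℝ) : ℂ) *
                    Complex.exp (-(2 * (π:ℂ) * I) * (n : ℂ) * ((dotZ s ρ : ℝ) : ℂ))) *
                    Complex.exp (2 * (π:ℂ) * I * ((dotZ k (θ₀ + (n:ℝ) • ρ) : ℝ) : ℂ)))) := by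
            simp only [Finset.mul_sum]
            apply Finset.sum_congr rfl
            intro n _
            ring
    rw [hfun]
    exact h3
  -- summability of ‖Kh‖
  have hKh_sum : Summable fun k : Fin d → ℤ => ‖Kh k‖ := by
    apply Summable.of_nonneg_of_le (fun k => norm_nonneg _) _ hsum
    intro k
    nth_rewrite 1 [← mul_one ‖Kh k‖]
    apply mul_le_mul_of_nonneg_left _ (norm_nonneg _)
    apply Real.one_le_exp
    have hπ : (0:ℝ) < π := Real.pi_pos
    have habs : (0:ℝ) ≤ ∑ j, |((k j : ℝ))| := Finset.sum_nonneg fun j _ => abs_nonneg _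
    positivity
  -- dominating sequence
  set D : ℕ → (Fin d → ℤ) → ℝ :=
    fun N k => (if k = s then 0 else ‖S N k‖) * ‖Kh k‖ with hD
  have hDnonneg : ∀ N k, 0 ≤ D N k := by
    intro N k
    apply mul_nonneg _ (norm_nonneg _)
    split
    · exact le_refl 0
    · exact norm_nonneg _
  have hDle : ∀ N k, D N k ≤ ‖Kh k‖ := by
    intro N k
    rw [hD]
    simp only
    by_cases hk : k = s
    · rw [if_pos hk, zero_mul]; exact norm_nonneg _
    · rw [if_neg hk]
      nth_rewrite 2 [← one_mul ‖Kh k‖]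
      exact mul_le_mul_of_nonneg_right (hSle N k) (norm_nonneg _)
  have hDtend : ∀ k, Tendsto (fun N => D N k) atTop (𝓝 0) := by
    intro k
    by_cases hk : k = s
    · simp only [hD, if_pos hk, zero_mul]
      exact tendsto_const_nhds
    · have hz1 := hzne k hk
      have hzn := hznorm k
      have hC : 0 < ‖1 - zf k‖ := by
        rw [norm_pos_iff, sub_ne_zero]
        exact fun h => hz1 h.symm
      have hIco : ∀ N : ℕ, ∑ n ∈ Finset.Ico 1 N, ((wpq p q ((n:ℝ)/N) : ℝ):ℂ) * zf k ^ n
          = ∑ n ∈ Finset.range N, ((wpq p q ((n:ℝ)/N) : ℝ):ℂ) * zf k ^ n := by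
        intro N
        rcases Nat.eq_zero_or_pos N with rfl | hN
        · simp
        rw [Finset.range_eq_Ico, ← Finset.sum_Ico_consecutive _ (Nat.zero_le 1) hN]
        have h0 : ∑ n ∈ (Finset.Ico 0 1 : Finset ℕ), ((wpq p q ((n:ℝ)/N) : ℝ):ℂ) * zf k ^ n
            = 0 := by
          simp [wpq_zero p q 0 (by simp)]
        rw [h0, zero_add]
      have hbound : ∀ N, ‖S N k‖ ≤ (Apq p q N)⁻¹ * (8 * (cpq p q)⁻¹ / ‖1 - zf k‖) := by
        intro N
        simp only [hS]
        rw [norm_mul, norm_inv, Complex.norm_real, Real.norm_eq_abs,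
          abs_of_nonneg (apq_nonneg p q N), hIco N]
        apply mul_le_mul_of_nonneg_left _ (inv_nonneg.mpr (apq_nonneg p q N))
        exact abel_bound p q hp hq (zf k) hzn hz1 N
      have h0 : Tendsto (fun N => (Apq p q N)⁻¹ * (8 * (cpq p q)⁻¹ / ‖1 - zf k‖))
          atTop (𝓝 0) := by
        rw [show (0:ℝ) = 0 * (8 * (cpq p q)⁻¹ / ‖1 - zf k‖) from (zero_mul _).symm]
        exact ((apq_tendsto p q hp hq).inv_tendsto_atTop).mul_const _
      have hSt : Tendsto (fun N => ‖S N k‖) atTop (𝓝 0) :=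
        squeeze_zero (fun N => norm_nonneg _) hbound h0
      simp only [hD, if_neg hk]
      simpa using hSt.mul_const ‖Kh k‖
  have htsum : Tendsto (fun N => ∑' k, D N k) atTop (𝓝 0) := by
    have := tendsto_tsum_of_dominated_convergence (f := D)
      (g := fun _ : Fin d → ℤ => (0:ℝ)) (bound := fun k => ‖Kh k‖) hKh_sum hDtend ?_
    · simpa using this
    · filter_upwards with N
      intro k
      rw [Real.norm_eq_abs, abs_of_nonneg (hDnonneg N k)]
      exact hDle N k
  -- conclusion
  rw [Metric.tendstoUniformly_iff]
  intro ε hε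
  have hev1 : ∀ᶠ N in atTop, ∑' k, D N k < ε := htsum.eventually_lt_const hε
  have hev2 : ∀ᶠ N in atTop, (1:ℝ) ≤ Apq p q N :=
    (apq_tendsto p q hp hq).eventually_ge_atTop 1
  filter_upwards [hev1, hev2] with N h1 h2
  intro θ₀
  rw [dist_eq_norm]
  refine lt_of_le_of_lt ?_ h1
  have hA : Apq p q N ≠ 0 := by linarith
  have hsum1 := hcoef N θ₀
  have hsum2 : HasSum (fun k => (if k = s then (1:ℂ) else 0) • Kh k) (Kh s) := by
    have heq : (fun k => (if k = s then (1:ℂ) else 0) • Kh k)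
        = (fun k => if k = s then Kh s else 0) := by
      funext k
      by_cases hk : k = s
      · subst hk; simp
      · simp [hk]
    rw [heq]
    exact hasSum_ite_eq s (Kh s)
  have hdiff := hsum2.sub hsum1
  have hnorm_eq : ∀ k, ‖(if k = s then (1:ℂ) else 0) • Kh k -
      (Complex.exp (2 * (π:ℂ) * I * ((dotZ (k - s) θ₀ : ℝ) : ℂ)) * S N k) • Kh k‖ = D N k := by
    intro k
    rw [← sub_smul, norm_smul]
    by_cases hk : k = s
    · subst hk
      rw [if_pos rfl, hSs N hA]
      simp only [hD, if_pos rfl, sub_self, dotZ_zero, Complex.ofReal_zero, mul_zero,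
        Complex.exp_zero, one_mul, sub_self, norm_zero, zero_mul]
      simp
    · rw [if_neg hk, zero_sub, norm_neg, norm_mul, hunit (dotZ (k - s) θ₀), one_mul]
      simp only [hD, if_neg hk]
  have hDsummable : Summable (D N) :=
    Summable.of_nonneg_of_le (hDnonneg N) (hDle N) hKh_sum
  calc ‖Kh s - _‖ = ‖∑' k, ((if k = s then (1:ℂ) else 0) • Kh k -
        (Complex.exp (2 * (π:ℂ) * I * ((dotZ (k - s) θ₀ : ℝ) : ℂ)) * S N k) • Kh k)‖ := by
        rw [hdiff.tsum_eq]
    _ ≤ ∑' k, ‖(if k = s then (1:ℂ) else 0) • Kh k -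
        (Complex.exp (2 * (π:ℂ) * I * ((dotZ (k - s) θ₀ : ℝ) : ℂ)) * S N k) • Kh k‖ := by
        apply norm_tsum_le_tsum_norm
        rw [show (fun k => ‖(if k = s then (1:ℂ) else 0) • Kh k -
          (Complex.exp (2 * (π:ℂ) * I * ((dotZ (k - s) θ₀ : ℝ) : ℂ)) * S N k) • Kh k‖) = D N
          from funext hnorm_eq]
        exact hDsummable
    _ = ∑' k, D N k := tsum_congr hnorm_eq
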